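/- Let κ > 0 and define ω(s,±) = s·(c_ww(κ) ± c_ww(κ s)) with c_ww extended evenly. Then for all integers n₁, n₂ with |n₁ − n₂| = 1 and all ξ ∈ (0, 1/2], ω(n₁+ξ, −) ≠ ω(n₂+ξ, +); that is, eigenvalues of the '−' and '+' branches of the linearization about the rest state never collide for adjacent Fourier modes. -/

import Mathlib

/-- The water-wave phase speed `c_ww(k) = √(tanh k / k)` (normalized depth and gravity),
extended by `c_ww(0) = 1`; it is even and positive. -/
noncomputable def cww (k : ℝ) : ℝ := if k = 0 then 1 else Real.sqrt (Real.tanh k / k)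

lemma tanh_strictMono : StrictMono Real.tanh := by
  intro a b hab
  rw [Real.tanh_eq_sinh_div_cosh, Real.tanh_eq_sinh_div_cosh,
    div_lt_div_iff₀ (Real.cosh_pos a) (Real.cosh_pos b)]
  have h : Real.sinh (a - b) < 0 := by
    rw [← Real.sinh_zero]
    exact Real.sinh_lt_sinh.mpr (by linarith)
  rw [Real.sinh_sub] at h
  linarith

lemma tanh_pos {x : ℝ} (hx : 0 < x) : 0 < Real.tanh x := by
  have := tanh_strictMono hx
  simpa using this

lemma cww_even (k : ℝ) : cww (-k) = cww k := by
  unfold cww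
  rcases eq_or_ne k 0 with rfl | hk
  · simp
  · rw [if_neg (by simpa using hk), if_neg hk, Real.tanh_neg, neg_div_neg_eq]

lemma cww_pos (k : ℝ) : 0 < cww k := by
  unfold cww
  rcases eq_or_ne k 0 with rfl | hk
  · simp
  · rw [if_neg hk]
    apply Real.sqrt_pos.mpr
    rcases hk.lt_or_gt with h | h
    · exact div_pos_of_neg_of_neg (by simpa using tanh_pos (by linarith : (0:ℝ) < -k)) h
    · exact div_pos (tanh_pos h) h

/-- `f s = s * cww (κ s)` in sqrt form for positive `s`. -/
lemma f_sqrt {κ s : ℝ} (hκ : 0 < κ) (hs : 0 < s) :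
    s * cww (κ * s) = Real.sqrt (s * Real.tanh (κ * s) / κ) := by
  have hks : κ * s ≠ 0 := by positivity
  rw [cww, if_neg hks]
  rw [← Real.sqrt_sq hs.le, ← Real.sqrt_mul (by positivity)]
  congr 1
  field_simp
  rw [Real.sq_sqrt (by positivity)]

lemma f_strictMono {κ : ℝ} (hκ : 0 < κ) : StrictMono (fun s : ℝ => s * cww (κ * s)) := by
  have hodd : ∀ s : ℝ, (-s) * cww (κ * (-s)) = -(s * cww (κ * s)) := by
    intro s
    rw [show κ * (-s) = -(κ * s) by ring, cww_even]
    ring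
  have hpos : ∀ s : ℝ, 0 < s → 0 < s * cww (κ * s) := fun s hs =>
    mul_pos hs (cww_pos _)
  have hmono : ∀ a b : ℝ, 0 ≤ a → a < b → a * cww (κ * a) < b * cww (κ * b) := by
    intro a b ha hab
    rcases ha.eq_or_lt with rfl | ha'
    · simpa using hpos b hab
    · rw [f_sqrt hκ ha', f_sqrt hκ (ha'.trans hab)]
      have ht : 0 < Real.tanh (κ * a) := tanh_pos (mul_pos hκ ha')
      apply Real.sqrt_lt_sqrt (le_of_lt (div_pos (mul_pos ha' ht) hκ))
      have hmul : a * Real.tanh (κ * a) < b * Real.tanh (κ * b) :=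
        mul_lt_mul'' hab (tanh_strictMono (by nlinarith)) ha'.le ht.le
      exact div_lt_div_of_pos_right hmul hκ
  intro a b hab
  rcases le_or_gt 0 a with ha | ha
  · exact hmono a b ha hab
  · rcases le_or_gt b 0 with hb | hb
    · have := hmono (-b) (-a) (by linarith) (by linarith)
      rw [hodd, hodd] at this
      simpa using this
    · have h1 : a * cww (κ * a) < 0 := by
        have := hpos (-a) (by linarith)
        rw [hodd] at this
        linarith
      exact h1.trans (hpos b hb)

lemma f_odd {κ : ℝ} (s : ℝ) : (-s) * cww (κ * (-s)) = -(s * cww (κ * s)) := by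
  rw [show κ * (-s) = -(κ * s) by ring, cww_even]
  ring

/-- For `κ > 0` and `ω(s,±) = s(c_ww(κ) ± c_ww(κ s))`, eigenvalues of the '−' and '+'
branches of the linearization about the rest state never collide for adjacent Fourier modes:
for all integers `n₁, n₂` with `|n₁ − n₂| = 1` and all `ξ ∈ (0, 1/2]`,
`ω(n₁+ξ, −) ≠ ω(n₂+ξ, +)`. -/
theorem no_adjacent_collision (κ : ℝ) (hκ : 0 < κ) (n₁ n₂ : ℤ) (hn : |n₁ - n₂| = 1)
    (ξ : ℝ) (hξ : ξ ∈ Set.Ioc (0 : ℝ) (1 / 2)) :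
    ((n₁ : ℝ) + ξ) * (cww κ - cww (κ * ((n₁ : ℝ) + ξ)))
      ≠ ((n₂ : ℝ) + ξ) * (cww κ + cww (κ * ((n₂ : ℝ) + ξ))) := by
  obtain ⟨hξ0, hξ2⟩ := hξ
  set f : ℝ → ℝ := fun s => s * cww (κ * s) with hf
  have hfm : StrictMono f := f_strictMono hκ
  have hg : StrictMono (fun s : ℝ => f (s + 1) + f s) := fun a b h =>
    add_lt_add (hfm (by linarith)) (hfm h)
  have hf1 : f 1 = cww κ := by simp [hf]
  have hf0 : f 0 = 0 := by simp [hf]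
  have hcase : n₁ = n₂ + 1 ∨ n₂ = n₁ + 1 := by
    rcases (abs_eq (by norm_num : (0:ℤ) ≤ 1)).mp hn with h | h <;> omega
  intro hEq
  rcases hcase with h | h
  · have hs : (n₁ : ℝ) + ξ = ((n₂ : ℝ) + ξ) + 1 := by
      have : (n₁ : ℝ) = (n₂ : ℝ) + 1 := by exact_mod_cast congrArg (Int.cast : ℤ → ℝ) h
      linarith
    set s : ℝ := (n₂ : ℝ) + ξ with hsdef
    rw [hs] at hEq
    have key : f (s + 1) + f s = f (0 + 1) + f 0 := by
      simp only [hf]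
      rw [show κ * (0 + 1) = κ by ring]
      linear_combination -hEq
    have hs0 : s = 0 := hg.injective key
    have h1 : (n₂ : ℝ) = -ξ := by
      have := hs0
      rw [hsdef] at this
      linarith
    have h2 : n₂ < 0 := by
      exact_mod_cast show (n₂ : ℝ) < 0 by rw [h1]; linarith
    have h3 : n₂ ≤ -1 := by omega
    have h4 : (n₂ : ℝ) ≤ -1 := by exact_mod_cast h3
    rw [h1] at h4
    linarith
  · have hs : (n₂ : ℝ) + ξ = ((n₁ : ℝ) + ξ) + 1 := by
      have : (n₂ : ℝ) = (n₁ : ℝ) + 1 := by exact_mod_cast congrArg (Int.cast : ℤ → ℝ) h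
      linarith
    set s : ℝ := (n₁ : ℝ) + ξ with hsdef
    rw [hs] at hEq
    have hfm1 : f (-1) = -(cww κ) := by
      have := f_odd (κ := κ) 1
      simp only [hf] at *
      rw [this]
      simp
    have key : f (s + 1) + f s = f (-1 + 1) + f (-1) := by
      simp only [hf] at hfm1 ⊢
      rw [show (-1 : ℝ) + 1 = 0 by ring]
      simp only [zero_mul]
      rw [hfm1]
      linear_combination -hEq
    have hs0 : s = -1 := hg.injective key
    have h1 : (n₁ : ℝ) = -1 - ξ := by
      have := hs0
      rw [hsdef] at this
      linarith
    have h2 : n₁ < -1 := by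
      exact_mod_cast show (n₁ : ℝ) < -1 by rw [h1]; linarith
    have h3 : n₁ ≤ -2 := by omega
    have h4 : (n₁ : ℝ) ≤ -2 := by exact_mod_cast h3
    rw [h1] at h4
    linarith
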